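/- Characterization of cardinality bounds: for every natural number k, a generalized causal team T satisfies the formula χ_k (the k-fold tensor disjunction of χ) if and only if the quotient T/≈ has at most k elements; and a causal team T satisfies χ_k iff |T⁻| ≤ k. -/

import Mathlib

namespace CausalTeams

attribute [local instance] Classical.propDecidable

/-- A system of functions over a signature: each endogenous variable `V ∈ En` has a set
of parents `PA V` (not containing `V`) and a function computing its value, which depends
only on the values of its parents. -/
structure FuncSystem (Var : Type) (Val : Var → Type) : Type where
  En : Set Var
  PA : Var → Set Var
  pa_ne : ∀ V, V ∉ PA V
  fn : ∀ V, (∀ W, Val W) → Val V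
  dep_only : ∀ V (s t : ∀ W, Val W), (∀ W ∈ PA V, s W = t W) → fn V s = fn V t

variable {Var : Type} {Val : Var → Type}

/-- Assignments of values to the variables. -/
abbrev Assign (Var : Type) (Val : Var → Type) : Type := ∀ V, Val V

/-- An assignment is compatible with a system of functions if each endogenous variable's
value is the one generated by its function. -/
def Compat (s : Assign Var Val) (F : FuncSystem Var Val) : Prop :=
  ∀ V ∈ F.En, s V = F.fn V s

/-- The endogenous variables whose generating function is constant. -/
def Cn (F : FuncSystem Var Val) : Set Var :=
  {V | V ∈ F.En ∧ ∀ s t : Assign Var Val, F.fn V s = F.fn V t}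

/-- The functions for `V` in `F` and `G` are equivalent up to dummy arguments: they agree
whenever their arguments agree on the common parents of `V`. -/
def fnEquiv (F G : FuncSystem Var Val) (V : Var) : Prop :=
  ∀ s t : Assign Var Val,
    (∀ W, W ∈ F.PA V → W ∈ G.PA V → s W = t W) → F.fn V s = G.fn V t

/-- Equivalence of systems of functions up to dummy arguments. -/
def sysEquiv (F G : FuncSystem Var Val) : Prop :=
  F.En \ Cn F = G.En \ Cn G ∧ ∀ V ∈ F.En \ Cn F, fnEquiv F G V

/-- The edge relation of the causal graph of `F`. -/
def Edge (F : FuncSystem Var Val) (W V : Var) : Prop := V ∈ F.En ∧ W ∈ F.PA V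

/-- `F` is recursive: its causal graph is acyclic. -/
def RecursiveSys (F : FuncSystem Var Val) : Prop :=
  ∀ V, ¬ Relation.TransGen (Edge F) V V

/-- The system of functions resulting from the intervention `do(X = x)`: the variables of
`X` are made exogenous; parents and functions of the remaining endogenous variables are kept. -/
def restrictSys (F : FuncSystem Var Val) (X : Finset Var) : FuncSystem Var Val where
  En := F.En \ ↑X
  PA := F.PA
  pa_ne := F.pa_ne
  fn := F.fn
  dep_only := F.dep_only

section InterveneAssign
variable [DecidableEq Var] [Fintype Var]

/-- One step of recomputation after the intervention `do(X = x)`. -/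
noncomputable def stepFn (F : FuncSystem Var Val) (X : Finset Var) (x : Assign Var Val)
    (s : Assign Var Val) : Assign Var Val :=
  fun V => if V ∈ X then x V else if V ∈ F.En then F.fn V s else s V

/-- The result of the intervention `do(X = x)` on the assignment `s`
(for recursive systems, iterating the recomputation step sufficiently many times
reaches the fixed point). -/
noncomputable def interveneAssign (F : FuncSystem Var Val) (X : Finset Var) (x : Assign Var Val)
    (s : Assign Var Val) : Assign Var Val :=
  (stepFn F X x)^[Fintype.card Var + 1] s

end InterveneAssign

/-- Formulas: equality atoms `V = v`, dependence atoms `=(Xs; Y)`, negation, conjunction,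
tensor disjunction, global disjunction, and interventionist counterfactuals
`X = x □→ φ` (the antecedent is a finite set of variables together with the values
imposed on them, read off from an assignment; such antecedents are always consistent). -/
inductive Formula (Var : Type) (Val : Var → Type) : Type where
  | eq : (V : Var) → Val V → Formula Var Val
  | dep : List Var → Var → Formula Var Val
  | neg : Formula Var Val → Formula Var Val
  | and : Formula Var Val → Formula Var Val → Formula Var Val
  | or : Formula Var Val → Formula Var Val → Formula Var Val
  | gor : Formula Var Val → Formula Var Val → Formula Var Val
  | cf : Finset Var → Assign Var Val → Formula Var Val → Formula Var Val

/-- CO-formulas: no dependence atoms, no global disjunction. -/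
def IsCO : Formula Var Val → Prop
  | .eq _ _ => True
  | .dep _ _ => False
  | .neg φ => IsCO φ
  | .and φ ψ => IsCO φ ∧ IsCO ψ
  | .or φ ψ => IsCO φ ∧ IsCO ψ
  | .gor _ _ => False
  | .cf _ _ φ => IsCO φ

/-- COD-formulas: CO plus dependence atoms; negation applies only to CO-formulas. -/
def IsCOD : Formula Var Val → Prop
  | .eq _ _ => True
  | .dep _ _ => True
  | .neg φ => IsCO φ
  | .and φ ψ => IsCOD φ ∧ IsCOD ψ
  | .or φ ψ => IsCOD φ ∧ IsCOD ψ
  | .gor _ _ => False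
  | .cf _ _ φ => IsCOD φ

/-- CO_⤘-formulas: CO plus global disjunction; negation applies only to CO-formulas. -/
def IsCOglobal : Formula Var Val → Prop
  | .eq _ _ => True
  | .dep _ _ => False
  | .neg φ => IsCO φ
  | .and φ ψ => IsCOglobal φ ∧ IsCOglobal ψ
  | .or φ ψ => IsCOglobal φ ∧ IsCOglobal ψ
  | .gor φ ψ => IsCOglobal φ ∧ IsCOglobal ψ
  | .cf _ _ φ => IsCOglobal φ

/-- Counterfactual-free formulas: no occurrence of `□→`. -/
def CFFree : Formula Var Val → Prop
  | .eq _ _ => True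
  | .dep _ _ => True
  | .neg φ => CFFree φ
  | .and φ ψ => CFFree φ ∧ CFFree ψ
  | .or φ ψ => CFFree φ ∧ CFFree ψ
  | .gor φ ψ => CFFree φ ∧ CFFree ψ
  | .cf _ _ _ => False

section Semantics
variable [DecidableEq Var] [Fintype Var]

/-- Causal team semantics: satisfaction of a formula by a team of assignments together
with a system of functions. -/
noncomputable def csat : FuncSystem Var Val → Set (Assign Var Val) → Formula Var Val → Prop
  | _, T, .eq V v => ∀ s ∈ T, s V = v
  | _, T, .dep Xs Y => ∀ s ∈ T, ∀ t ∈ T, (∀ W ∈ Xs, s W = t W) → s Y = t Y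
  | F, T, .neg φ => ∀ s ∈ T, ¬ csat F {s} φ
  | F, T, .and φ ψ => csat F T φ ∧ csat F T ψ
  | F, T, .or φ ψ => ∃ T₁ T₂, T₁ ∪ T₂ = T ∧ csat F T₁ φ ∧ csat F T₂ ψ
  | F, T, .gor φ ψ => csat F T φ ∨ csat F T ψ
  | F, T, .cf X x φ => csat (restrictSys F X) (interveneAssign F X x '' T) φ

end Semantics

/-- Generalized causal teams: sets of pairs of an assignment and a system of functions. -/
abbrev GCT (Var : Type) (Val : Var → Type) : Type :=
  Set (Assign Var Val × FuncSystem Var Val)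

/-- The team component of a generalized causal team. -/
def teamOf (T : GCT Var Val) : Set (Assign Var Val) := Prod.fst '' T

/-- A genuine (recursive) generalized causal team: all pairs are compatible and all
function components are recursive. -/
def IsGCT (T : GCT Var Val) : Prop := ∀ p ∈ T, Compat p.1 p.2 ∧ RecursiveSys p.2

section GSemantics
variable [DecidableEq Var] [Fintype Var]

/-- Pointwise intervention on a generalized causal team. -/
noncomputable def gIntervene (T : GCT Var Val) (X : Finset Var) (x : Assign Var Val) : GCT Var Val :=
  (fun p => (interveneAssign p.2 X x p.1, restrictSys p.2 X)) '' T

/-- Generalized causal team semantics. -/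
noncomputable def gsat : GCT Var Val → Formula Var Val → Prop
  | T, .eq V v => ∀ p ∈ T, p.1 V = v
  | T, .dep Xs Y => ∀ p ∈ T, ∀ q ∈ T, (∀ W ∈ Xs, p.1 W = q.1 W) → p.1 Y = q.1 Y
  | T, .neg φ => ∀ p ∈ T, ¬ gsat {p} φ
  | T, .and φ ψ => gsat T φ ∧ gsat T ψ
  | T, .or φ ψ => ∃ T₁ T₂, T₁ ∪ T₂ = T ∧ gsat T₁ φ ∧ gsat T₂ ψ
  | T, .gor φ ψ => gsat T φ ∨ gsat T ψ
  | T, .cf X x φ => gsat (gIntervene T X x) φ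

end GSemantics

/-- Equivalence of generalized causal teams: for each system of functions `F`, the
assignments occurring together with a function component `∼`-similar to `F` are the same. -/
def gctEquiv (S T : GCT Var Val) : Prop :=
  ∀ F : FuncSystem Var Val,
    {s | ∃ G, (s, G) ∈ S ∧ sysEquiv G F} = {s | ∃ G, (s, G) ∈ T ∧ sysEquiv G F}

/-- `S ≼ T` iff `S ≈ R ⊆ T` for some `R`. -/
def sle (S T : GCT Var Val) : Prop := ∃ R : GCT Var Val, gctEquiv S R ∧ R ⊆ T

/-- The generalized causal team generated by a causal team. -/
def toGCT (team : Set (Assign Var Val)) (F : FuncSystem Var Val) : GCT Var Val :=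
  (fun s => (s, F)) '' team

/-- Equivalence of elements of generalized causal teams: same assignment and
`∼`-similar function components. -/
def pairEquiv (p q : Assign Var Val × FuncSystem Var Val) : Prop :=
  p.1 = q.1 ∧ sysEquiv p.2 q.2

/-- The quotient `T/≈` has at most `k` elements: `T` is covered by `k` representatives. -/
def quotCardLE (T : GCT Var Val) (k : ℕ) : Prop :=
  ∃ R : Finset (Assign Var Val × FuncSystem Var Val),
    R.card ≤ k ∧ ∀ p ∈ T, ∃ q ∈ R, pairEquiv p q

section Entailment
variable [DecidableEq Var] [Fintype Var]

/-- Entailment over (recursive) generalized causal teams. -/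
def gEntails (Δ : Set (Formula Var Val)) (α : Formula Var Val) : Prop :=
  ∀ T : GCT Var Val, IsGCT T → (∀ γ ∈ Δ, gsat T γ) → gsat T α

/-- Entailment over (recursive) causal teams. -/
def cEntails (Δ : Set (Formula Var Val)) (α : Formula Var Val) : Prop :=
  ∀ (F : FuncSystem Var Val) (team : Set (Assign Var Val)),
    RecursiveSys F → (∀ s ∈ team, Compat s F) →
    (∀ γ ∈ Δ, csat F team γ) → csat F team α

/-- Causal incompatibility of two formulas. -/
def Incompatible (φ ψ : Formula Var Val) : Prop :=
  ∀ (F G : FuncSystem Var Val) (S T : Set (Assign Var Val)),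
    S.Nonempty → T.Nonempty → RecursiveSys F → RecursiveSys G →
    (∀ s ∈ S, Compat s F) → (∀ t ∈ T, Compat t G) →
    csat F S φ → csat G T ψ → ¬ sysEquiv F G

end Entailment

section FormulaHelpers
variable [DecidableEq Var] [Fintype Var] [Nonempty Var]
  [∀ V, Fintype (Val V)] [∀ V, Nonempty (Val V)]

/-- The falsum formula `⊥ := V = v ∧ V ≠ v`. -/
noncomputable def falsum : Formula Var Val :=
  let V := Classical.arbitrary Var
  Formula.and (Formula.eq V (Classical.arbitrary (Val V)))
    (Formula.neg (Formula.eq V (Classical.arbitrary (Val V))))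

/-- Finite conjunction (the empty conjunction is `¬⊥`). -/
noncomputable def bigAnd : List (Formula Var Val) → Formula Var Val
  | [] => Formula.neg falsum
  | [φ] => φ
  | φ :: l => Formula.and φ (bigAnd l)

/-- Finite tensor disjunction (the empty disjunction is `⊥`). -/
noncomputable def bigOr : List (Formula Var Val) → Formula Var Val
  | [] => falsum
  | [φ] => φ
  | φ :: l => Formula.or φ (bigOr l)

/-- Finite global disjunction (the empty disjunction is `⊥`). -/
noncomputable def bigGor : List (Formula Var Val) → Formula Var Val
  | [] => falsum
  | [φ] => φ
  | φ :: l => Formula.gor φ (bigGor l)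

/-- The conjunction `⋀_{V ∈ Dom} V = s(V)` describing the assignment `s`. -/
noncomputable def eqConj (s : Assign Var Val) : Formula Var Val :=
  bigAnd ((Finset.univ : Finset Var).toList.map fun V => Formula.eq V (s V))

/-- `Θ^A := ⋁_{s ∈ A} ⋀_{V ∈ Dom} V = s(V)`. -/
noncomputable def Theta (A : Finset (Assign Var Val)) : Formula Var Val :=
  bigOr (A.toList.map eqConj)

/-- The constancy atom `=(V)`. -/
def conAtom (V : Var) : Formula Var Val := Formula.dep [] V

/-- `μ := ⋀_{V ∈ Dom} ⋀_{w} (W_V = w □→ =(V))` where `W_V = Dom \ {V}`. -/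
noncomputable def muForm : Formula Var Val :=
  bigAnd ((Finset.univ : Finset Var).toList.map fun V =>
    bigAnd (((Finset.univ : Finset (Assign Var Val))).toList.map fun w =>
      Formula.cf ((Finset.univ : Finset Var).erase V) w (conAtom V)))

/-- `χ := μ ∧ ⋀_{V ∈ Dom} =(V)`. -/
noncomputable def chiForm : Formula Var Val :=
  Formula.and muForm (bigAnd ((Finset.univ : Finset Var).toList.map conAtom))

/-- `χ_k`: the `k`-fold tensor disjunction of `χ` (with `χ_0 := ⊥`). -/
noncomputable def chiK : ℕ → Formula Var Val
  | 0 => falsum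
  | 1 => chiForm
  | n + 2 => Formula.or chiForm (chiK (n + 1))

end FormulaHelpers


section Aux
variable {Var : Type} [Fintype Var] [DecidableEq Var] [Nonempty Var]
  {Val : Var → Type} [∀ V, Fintype (Val V)] [∀ V, Nonempty (Val V)]

lemma gsat_falsum {T : GCT Var Val} : gsat T (falsum : Formula Var Val) ↔ T = ∅ := by
  simp only [falsum, gsat]
  constructor
  · rintro ⟨h1, h2⟩
    by_contra hne
    obtain ⟨p, hp⟩ := Set.nonempty_iff_ne_empty.mpr hne
    exact h2 p hp fun q hq => by
      have hqp : q = p := hq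
      rw [hqp]; exact h1 p hp
  · rintro rfl
    exact ⟨fun p hp => hp.elim, fun p hp => hp.elim⟩

lemma csat_falsum {F : FuncSystem Var Val} {T : Set (Assign Var Val)} :
    csat F T (falsum : Formula Var Val) ↔ T = ∅ := by
  simp only [falsum, csat]
  constructor
  · rintro ⟨h1, h2⟩
    by_contra hne
    obtain ⟨p, hp⟩ := Set.nonempty_iff_ne_empty.mpr hne
    exact h2 p hp fun q hq => by
      have hqp : q = p := hq
      rw [hqp]; exact h1 p hp
  · rintro rfl
    exact ⟨fun p hp => hp.elim, fun p hp => hp.elim⟩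

lemma gsat_neg_falsum {T : GCT Var Val} : gsat T (Formula.neg (falsum : Formula Var Val)) := by
  show ∀ p ∈ T, ¬ gsat {p} (falsum : Formula Var Val)
  intro p hp hf
  rw [gsat_falsum] at hf
  exact Set.singleton_ne_empty p hf

lemma csat_neg_falsum {F : FuncSystem Var Val} {T : Set (Assign Var Val)} :
    csat F T (Formula.neg (falsum : Formula Var Val)) := by
  show ∀ s ∈ T, ¬ csat F {s} (falsum : Formula Var Val)
  intro s hs hf
  rw [csat_falsum] at hf
  exact Set.singleton_ne_empty s hf

lemma gsat_bigAnd {T : GCT Var Val} {l : List (Formula Var Val)} :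
    gsat T (bigAnd l) ↔ ∀ φ ∈ l, gsat T φ := by
  induction l with
  | nil =>
      constructor
      · intro _ φ hφ; exact absurd hφ List.not_mem_nil
      · intro _; exact gsat_neg_falsum
  | cons φ l ih =>
      cases l with
      | nil => simp [bigAnd]
      | cons ψ l' =>
          rw [show bigAnd (φ :: ψ :: l') = Formula.and φ (bigAnd (ψ :: l')) from rfl]
          simp only [gsat, ih, List.mem_cons]
          constructor
          · rintro ⟨h1, h2⟩ χ (rfl | h)
            · exact h1
            · exact h2 χ (by simpa using h)
          · intro h
            exact ⟨h φ (Or.inl rfl), fun χ hχ => h χ (Or.inr hχ)⟩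

lemma csat_bigAnd {F : FuncSystem Var Val} {T : Set (Assign Var Val)} {l : List (Formula Var Val)} :
    csat F T (bigAnd l) ↔ ∀ φ ∈ l, csat F T φ := by
  induction l with
  | nil =>
      constructor
      · intro _ φ hφ; exact absurd hφ List.not_mem_nil
      · intro _; exact csat_neg_falsum
  | cons φ l ih =>
      cases l with
      | nil => simp [bigAnd]
      | cons ψ l' =>
          rw [show bigAnd (φ :: ψ :: l') = Formula.and φ (bigAnd (ψ :: l')) from rfl]
          simp only [csat, ih, List.mem_cons]
          constructor
          · rintro ⟨h1, h2⟩ χ (rfl | h)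
            · exact h1
            · exact h2 χ (by simpa using h)
          · intro h
            exact ⟨h φ (Or.inl rfl), fun χ hχ => h χ (Or.inr hχ)⟩

set_option linter.unusedSectionVars false

lemma stepFn_mem {F : FuncSystem Var Val} {X : Finset Var} {w : Assign Var Val}
    (t : Assign Var Val) {W : Var} (hW : W ∈ X) : stepFn F X w t W = w W := by
  simp [stepFn, hW]

lemma stepFn_notEn {F : FuncSystem Var Val} {X : Finset Var} {w : Assign Var Val}
    (t : Assign Var Val) {W : Var} (hW : W ∉ X) (hEn : W ∉ F.En) :
    stepFn F X w t W = t W := by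
  simp [stepFn, hW, hEn]

lemma iter_notEn {F : FuncSystem Var Val} {X : Finset Var} {w : Assign Var Val}
    (s : Assign Var Val) {W : Var} (hW : W ∉ X) (hEn : W ∉ F.En) (m : ℕ) :
    (stepFn F X w)^[m] s W = s W := by
  induction m with
  | zero => rfl
  | succ m ih => rw [Function.iterate_succ_apply', stepFn_notEn _ hW hEn, ih]

/-- Value of the intervention `do(Dom \ {V} = w)` off `V`. -/
lemma interveneAssign_erase_ne (F : FuncSystem Var Val) (V : Var) (w s : Assign Var Val)
    {W : Var} (hW : W ≠ V) :
    interveneAssign F (Finset.univ.erase V) w s W = w W := by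
  have hWX : W ∈ Finset.univ.erase V := Finset.mem_erase.mpr ⟨hW, Finset.mem_univ W⟩
  unfold interveneAssign
  rw [Function.iterate_succ_apply', stepFn_mem _ hWX]

/-- Value of the intervention `do(Dom \ {V} = w)` at `V`. -/
lemma interveneAssign_erase_self (F : FuncSystem Var Val) (V : Var) (w s : Assign Var Val) :
    interveneAssign F (Finset.univ.erase V) w s V =
      if V ∈ F.En then F.fn V w else s V := by
  have hVX : V ∉ Finset.univ.erase V := Finset.notMem_erase V _
  obtain ⟨n, hn⟩ : ∃ n, Fintype.card Var = n + 1 :=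
    ⟨Fintype.card Var - 1, (Nat.succ_pred_eq_of_pos Fintype.card_pos).symm⟩
  set X := Finset.univ.erase V with hX
  unfold interveneAssign
  rw [hn]
  by_cases hEn : V ∈ F.En
  · rw [if_pos hEn]
    rw [show n + 1 + 1 = (n + 1) + 1 from rfl, Function.iterate_succ_apply']
    have hstep : stepFn F X w ((stepFn F X w)^[n + 1] s) V
        = F.fn V ((stepFn F X w)^[n + 1] s) := by
      simp [stepFn, hVX, hEn]
    rw [hstep]
    apply F.dep_only
    intro W hW
    have hWV : W ≠ V := fun h => F.pa_ne V (h ▸ hW)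
    rw [Function.iterate_succ_apply', stepFn_mem _ (Finset.mem_erase.mpr ⟨hWV, Finset.mem_univ W⟩)]
  · rw [if_neg hEn]
    exact iter_notEn s hVX hEn _

/-- Characterization of `sysEquiv` via pointwise equality of the functions. -/
lemma sysEquiv_iff {F G : FuncSystem Var Val} :
    sysEquiv F G ↔
      (F.En \ Cn F = G.En \ Cn G ∧ ∀ V ∈ F.En \ Cn F, ∀ s, F.fn V s = G.fn V s) := by
  constructor
  · rintro ⟨h1, h2⟩
    exact ⟨h1, fun V hV s => h2 V hV s s (fun _ _ _ => rfl)⟩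
  · rintro ⟨h1, h2⟩
    refine ⟨h1, fun V hV s t hst => ?_⟩
    set u : Assign Var Val := fun W => if W ∈ F.PA V then s W else t W with hu
    have h3 : F.fn V s = F.fn V u := by
      apply F.dep_only
      intro W hW; simp [hu, hW]
    have h4 : G.fn V u = G.fn V t := by
      apply G.dep_only
      intro W hW
      by_cases hWF : W ∈ F.PA V
      · simp only [hu, if_pos hWF]; exact hst W hWF hW
      · simp [hu, hWF]
    rw [h3, h2 V hV u, h4]

lemma sysEquiv_refl (F : FuncSystem Var Val) : sysEquiv F F :=
  sysEquiv_iff.mpr ⟨rfl, fun _ _ _ => rfl⟩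

lemma sysEquiv_symm {F G : FuncSystem Var Val} (h : sysEquiv F G) : sysEquiv G F := by
  rw [sysEquiv_iff] at h ⊢
  exact ⟨h.1.symm, fun V hV s => (h.2 V (h.1 ▸ hV) s).symm⟩

lemma sysEquiv_trans {F G H : FuncSystem Var Val} (h1 : sysEquiv F G) (h2 : sysEquiv G H) :
    sysEquiv F H := by
  rw [sysEquiv_iff] at h1 h2 ⊢
  exact ⟨h1.1.trans h2.1, fun V hV s => (h1.2 V hV s).trans (h2.2 V (h1.1 ▸ hV) s)⟩

lemma pairEquiv_refl (p : Assign Var Val × FuncSystem Var Val) : pairEquiv p p :=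
  ⟨rfl, sysEquiv_refl _⟩

lemma pairEquiv_symm {p q : Assign Var Val × FuncSystem Var Val} (h : pairEquiv p q) :
    pairEquiv q p := ⟨h.1.symm, sysEquiv_symm h.2⟩

lemma pairEquiv_trans {p q r : Assign Var Val × FuncSystem Var Val}
    (h1 : pairEquiv p q) (h2 : pairEquiv q r) : pairEquiv p r :=
  ⟨h1.1.trans h2.1, sysEquiv_trans h1.2 h2.2⟩

lemma mem_map_univ_of {α β : Type*} [Fintype α] (f : α → β) (a : α) :
    f a ∈ (Finset.univ : Finset α).toList.map f :=
  List.mem_map_of_mem (f := f) (Finset.mem_toList.mpr (Finset.mem_univ a))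

/-- Semantics of `μ` over generalized causal teams. -/
lemma gsat_mu {T : GCT Var Val} :
    gsat T (muForm : Formula Var Val) ↔
      ∀ (V : Var) (w : Assign Var Val), ∀ p ∈ T, ∀ q ∈ T,
        (if V ∈ p.2.En then p.2.fn V w else p.1 V)
          = (if V ∈ q.2.En then q.2.fn V w else q.1 V) := by
  constructor
  · intro h V w p hp q hq
    have h0 : gsat T (muForm : Formula Var Val) := h
    rw [muForm, gsat_bigAnd] at h0
    have h1 := h0 _ (mem_map_univ_of _ V)
    rw [gsat_bigAnd] at h1
    have h2 := h1 _ (mem_map_univ_of _ w)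
    have h3 : gsat (gIntervene T (Finset.univ.erase V) w) (conAtom V : Formula Var Val) := h2
    have h4 : ∀ p' ∈ gIntervene T (Finset.univ.erase V) w,
        ∀ q' ∈ gIntervene T (Finset.univ.erase V) w,
        (∀ W ∈ ([] : List Var), p'.1 W = q'.1 W) → p'.1 V = q'.1 V := h3
    have h5 := h4 _ (Set.mem_image_of_mem _ hp) _ (Set.mem_image_of_mem _ hq)
      (fun W hW => absurd hW List.not_mem_nil)
    simpa only [interveneAssign_erase_self] using h5
  · intro h
    rw [muForm, gsat_bigAnd]
    rintro φ hφ
    obtain ⟨V, -, rfl⟩ := List.mem_map.mp hφ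
    rw [gsat_bigAnd]
    rintro ψ hψ
    obtain ⟨w, -, rfl⟩ := List.mem_map.mp hψ
    show gsat (gIntervene T (Finset.univ.erase V) w) (conAtom V : Formula Var Val)
    show ∀ p' ∈ gIntervene T (Finset.univ.erase V) w,
        ∀ q' ∈ gIntervene T (Finset.univ.erase V) w,
        (∀ W ∈ ([] : List Var), p'.1 W = q'.1 W) → p'.1 V = q'.1 V
    rintro p' ⟨p, hp, rfl⟩ q' ⟨q, hq, rfl⟩ -
    show interveneAssign p.2 _ w p.1 V = interveneAssign q.2 _ w q.1 V
    rw [interveneAssign_erase_self, interveneAssign_erase_self]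
    exact h V w p hp q hq

/-- Semantics of the conjunction of constancy atoms. -/
lemma gsat_conAtoms {T : GCT Var Val} :
    gsat T (bigAnd ((Finset.univ : Finset Var).toList.map (conAtom : Var → Formula Var Val))) ↔
      ∀ p ∈ T, ∀ q ∈ T, p.1 = q.1 := by
  rw [gsat_bigAnd]
  constructor
  · intro h p hp q hq
    funext V
    have h1 : gsat T (conAtom V : Formula Var Val) := h _ (mem_map_univ_of _ V)
    exact h1 p hp q hq (fun W hW => absurd hW List.not_mem_nil)
  · intro h φ hφ
    obtain ⟨V, -, rfl⟩ := List.mem_map.mp hφ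
    intro p hp q hq _
    rw [h p hp q hq]

/-- `χ` holds on a genuine generalized causal team iff all pairs are `≈`-equivalent. -/
lemma gsat_chi {T : GCT Var Val} (hT : IsGCT T) :
    gsat T (chiForm : Formula Var Val) ↔ ∀ p ∈ T, ∀ q ∈ T, pairEquiv p q := by
  have hsplit : gsat T (chiForm : Formula Var Val) ↔
      gsat T (muForm : Formula Var Val) ∧
      gsat T (bigAnd ((Finset.univ : Finset Var).toList.map (conAtom : Var → Formula Var Val))) :=
    Iff.rfl
  rw [hsplit, gsat_mu, gsat_conAtoms]
  constructor
  · rintro ⟨hmu, hcon⟩ p hp q hq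
    refine ⟨hcon p hp q hq, ?_⟩
    have key : ∀ V w, (if V ∈ p.2.En then p.2.fn V w else p.1 V)
        = (if V ∈ q.2.En then q.2.fn V w else q.1 V) := fun V w => hmu V w p hp q hq
    have hfn : ∀ V, V ∈ p.2.En → V ∈ q.2.En → ∀ w, p.2.fn V w = q.2.fn V w := by
      intro V h1 h2 w
      have := key V w
      rwa [if_pos h1, if_pos h2] at this
    have hconst1 : ∀ V, V ∈ p.2.En → V ∉ q.2.En → V ∈ Cn p.2 := by
      intro V h1 h2
      refine ⟨h1, fun a b => ?_⟩
      have ha := key V a; have hb := key V b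
      rw [if_pos h1, if_neg h2] at ha hb
      rw [ha, hb]
    have hconst2 : ∀ V, V ∈ q.2.En → V ∉ p.2.En → V ∈ Cn q.2 := by
      intro V h1 h2
      refine ⟨h1, fun a b => ?_⟩
      have ha := (key V a).symm; have hb := (key V b).symm
      rw [if_pos h1, if_neg h2] at ha hb
      rw [ha, hb]
    have hEn : p.2.En \ Cn p.2 = q.2.En \ Cn q.2 := by
      ext V
      constructor
      · rintro ⟨h1, h2⟩
        have h3 : V ∈ q.2.En := by
          by_contra h3
          exact h2 (hconst1 V h1 h3)
        refine ⟨h3, fun h4 => h2 ⟨h1, fun a b => ?_⟩⟩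
        rw [hfn V h1 h3 a, hfn V h1 h3 b, h4.2 a b]
      · rintro ⟨h1, h2⟩
        have h3 : V ∈ p.2.En := by
          by_contra h3
          exact h2 (hconst2 V h1 h3)
        refine ⟨h3, fun h4 => h2 ⟨h1, fun a b => ?_⟩⟩
        rw [← hfn V h3 h1 a, ← hfn V h3 h1 b, h4.2 a b]
    exact sysEquiv_iff.mpr ⟨hEn, fun V hV w => hfn V hV.1 ((hEn ▸ hV).1) w⟩
  · intro h
    constructor
    · intro V w p hp q hq
      obtain ⟨hassign, hsys⟩ := h p hp q hq
      obtain ⟨hEn, hfn⟩ := sysEquiv_iff.mp hsys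
      by_cases hV : V ∈ p.2.En \ Cn p.2
      · rw [if_pos hV.1, if_pos (hEn ▸ hV : V ∈ q.2.En \ Cn q.2).1]
        exact hfn V hV w
      · have hval1 : (if V ∈ p.2.En then p.2.fn V w else p.1 V) = p.1 V := by
          by_cases h1 : V ∈ p.2.En
          · rw [if_pos h1]
            have hc : V ∈ Cn p.2 := by
              by_contra hc; exact hV ⟨h1, hc⟩
            rw [hc.2 w p.1, ((hT p hp).1 V h1).symm]
          · rw [if_neg h1]
        have hV' : V ∉ q.2.En \ Cn q.2 := fun hc => hV (hEn ▸ hc)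
        have hval2 : (if V ∈ q.2.En then q.2.fn V w else q.1 V) = q.1 V := by
          by_cases h1 : V ∈ q.2.En
          · rw [if_pos h1]
            have hc : V ∈ Cn q.2 := by
              by_contra hc; exact hV' ⟨h1, hc⟩
            rw [hc.2 w q.1, ((hT q hq).1 V h1).symm]
          · rw [if_neg h1]
        rw [hval1, hval2, hassign]
    · exact fun p hp q hq => (h p hp q hq).1

/-- `χ` holds on a causal team iff the team is a subsingleton. -/
lemma csat_chi {F : FuncSystem Var Val} {team : Set (Assign Var Val)} :
    csat F team (chiForm : Formula Var Val) ↔ team.Subsingleton := by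
  have hsplit : csat F team (chiForm : Formula Var Val) ↔
      csat F team (muForm : Formula Var Val) ∧
      csat F team (bigAnd ((Finset.univ : Finset Var).toList.map (conAtom : Var → Formula Var Val))) :=
    Iff.rfl
  rw [hsplit]
  constructor
  · rintro ⟨-, hcon⟩ s hs t ht
    rw [csat_bigAnd] at hcon
    funext V
    have h1 : csat F team (conAtom V : Formula Var Val) := hcon _ (mem_map_univ_of _ V)
    exact h1 s hs t ht (fun W hW => absurd hW List.not_mem_nil)
  · intro hsub
    constructor
    · rw [muForm, csat_bigAnd]
      rintro φ hφ
      obtain ⟨V, -, rfl⟩ := List.mem_map.mp hφ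
      rw [csat_bigAnd]
      rintro ψ hψ
      obtain ⟨w, -, rfl⟩ := List.mem_map.mp hψ
      show ∀ s' ∈ interveneAssign F (Finset.univ.erase V) w '' team,
          ∀ t' ∈ interveneAssign F (Finset.univ.erase V) w '' team,
          (∀ W ∈ ([] : List Var), s' W = t' W) → s' V = t' V
      rintro s' ⟨s, hs, rfl⟩ t' ⟨t, ht, rfl⟩ -
      rw [hsub hs ht]
    · rw [csat_bigAnd]
      rintro φ hφ
      obtain ⟨V, -, rfl⟩ := List.mem_map.mp hφ
      intro s hs t ht _
      rw [hsub hs ht]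

lemma quotCardLE_zero {T : GCT Var Val} : quotCardLE T 0 ↔ T = ∅ := by
  constructor
  · rintro ⟨R, hc, hcov⟩
    have hR : R = ∅ := Finset.card_eq_zero.mp (Nat.le_zero.mp hc)
    ext p
    simp only [Set.mem_empty_iff_false, iff_false]
    intro hp
    obtain ⟨q, hq, -⟩ := hcov p hp
    rw [hR] at hq
    exact absurd hq (Finset.notMem_empty q)
  · rintro rfl
    exact ⟨∅, le_refl _, fun p hp => hp.elim⟩

lemma quotCardLE_one {T : GCT Var Val} :
    quotCardLE T 1 ↔ ∀ p ∈ T, ∀ q ∈ T, pairEquiv p q := by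
  constructor
  · rintro ⟨R, hc, hcov⟩ p hp q hq
    obtain ⟨rp, hrp, hp'⟩ := hcov p hp
    obtain ⟨rq, hrq, hq'⟩ := hcov q hq
    have : rp = rq := Finset.card_le_one.mp hc rp hrp rq hrq
    exact pairEquiv_trans hp' (this ▸ pairEquiv_symm hq')
  · intro h
    rcases T.eq_empty_or_nonempty with rfl | ⟨p₀, hp₀⟩
    · exact ⟨∅, by simp, fun p hp => hp.elim⟩
    · exact ⟨{p₀}, by simp, fun p hp => ⟨p₀, Finset.mem_singleton_self p₀, h p hp p₀ hp₀⟩⟩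

lemma quotCardLE_succ {T : GCT Var Val} {k : ℕ} :
    quotCardLE T (k + 1) ↔
      ∃ T₁ T₂ : GCT Var Val, T₁ ∪ T₂ = T ∧ quotCardLE T₁ 1 ∧ quotCardLE T₂ k := by
  constructor
  · rintro ⟨R, hcard, hcov⟩
    rcases R.eq_empty_or_nonempty with rfl | ⟨q₀, hq₀⟩
    · have hT : T = ∅ := by
        ext p
        simp only [Set.mem_empty_iff_false, iff_false]
        intro hp
        obtain ⟨q, hq, -⟩ := hcov p hp
        exact absurd hq (Finset.notMem_empty q)
      refine ⟨∅, ∅, by simp [hT], ⟨∅, by simp, fun p hp => hp.elim⟩,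
        ⟨∅, by simp, fun p hp => hp.elim⟩⟩
    · refine ⟨{p | p ∈ T ∧ pairEquiv p q₀}, {p | p ∈ T ∧ ¬ pairEquiv p q₀}, ?_, ?_, ?_⟩
      · ext p
        by_cases h : pairEquiv p q₀ <;> simp [h] <;> tauto
      · exact ⟨{q₀}, by simp, fun p hp => ⟨q₀, Finset.mem_singleton_self q₀, hp.2⟩⟩
      · refine ⟨R.erase q₀, ?_, ?_⟩
        · rw [Finset.card_erase_of_mem hq₀]
          omega
        · rintro p ⟨hp, hne⟩
          obtain ⟨q, hq, hpe⟩ := hcov p hp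
          refine ⟨q, Finset.mem_erase.mpr ⟨?_, hq⟩, hpe⟩
          rintro rfl
          exact hne hpe
  · rintro ⟨T₁, T₂, rfl, ⟨R₁, hc1, hcov1⟩, ⟨R₂, hc2, hcov2⟩⟩
    refine ⟨R₁ ∪ R₂, le_trans (Finset.card_union_le _ _) (by omega), ?_⟩
    rintro p (hp | hp)
    · obtain ⟨q, hq, h⟩ := hcov1 p hp
      exact ⟨q, Finset.mem_union_left _ hq, h⟩
    · obtain ⟨q, hq, h⟩ := hcov2 p hp
      exact ⟨q, Finset.mem_union_right _ hq, h⟩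

lemma ncard_succ_split {team : Set (Assign Var Val)} {k : ℕ} :
    team.ncard ≤ k + 1 ↔
      ∃ T₁ T₂ : Set (Assign Var Val), T₁ ∪ T₂ = team ∧ T₁.ncard ≤ 1 ∧ T₂.ncard ≤ k := by
  constructor
  · intro h
    rcases team.eq_empty_or_nonempty with rfl | ⟨s₀, hs₀⟩
    · exact ⟨∅, ∅, by simp, by simp, by simp⟩
    · refine ⟨{s₀}, team \ {s₀}, ?_, by simp, ?_⟩
      · rw [Set.union_diff_cancel (by simpa using hs₀)]
      · have hd := Set.ncard_diff_singleton_of_mem hs₀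
        omega
  · rintro ⟨T₁, T₂, rfl, h1, h2⟩
    have := Set.ncard_union_le T₁ T₂
    omega

lemma IsGCT_subset {S T : GCT Var Val} (hT : IsGCT T) (h : S ⊆ T) : IsGCT S :=
  fun p hp => hT p (h hp)

end Aux

/-- for every natural number k, a generalized causal team satisfies χ_k
iff its quotient by ≈ has at most k elements; a causal team satisfies χ_k iff its team
component has at most k assignments. -/
theorem chiK_characterizes_cardinality {Var : Type} [Fintype Var] [DecidableEq Var] [Nonempty Var]
    {Val : Var → Type} [∀ V, Fintype (Val V)] [∀ V, Nonempty (Val V)]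
    (k : ℕ) :
    (∀ T : GCT Var Val, IsGCT T → (gsat T (chiK k) ↔ quotCardLE T k)) ∧
    (∀ (F : FuncSystem Var Val) (team : Set (Assign Var Val)),
        RecursiveSys F → (∀ s ∈ team, Compat s F) →
        (csat F team (chiK k) ↔ team.ncard ≤ k)) := by
  induction k with
  | zero =>
      constructor
      · intro T hT
        rw [show (chiK 0 : Formula Var Val) = falsum from rfl, gsat_falsum, quotCardLE_zero]
      · intro F team hF hcomp
        rw [show (chiK 0 : Formula Var Val) = falsum from rfl, csat_falsum, Nat.le_zero,
          Set.ncard_eq_zero (Set.toFinite team)]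
  | succ k ih =>
      cases k with
      | zero =>
          constructor
          · intro T hT
            rw [show (chiK 1 : Formula Var Val) = chiForm from rfl, gsat_chi hT, quotCardLE_one]
          · intro F team hF hcomp
            rw [show (chiK 1 : Formula Var Val) = chiForm from rfl, csat_chi]
            constructor
            · intro hs
              exact (Set.ncard_le_one (Set.toFinite team)).mpr fun a ha b hb => hs ha hb
            · intro h a ha b hb
              exact (Set.ncard_le_one (Set.toFinite team)).mp h a ha b hb
      | succ k' =>
          have hrw : (chiK (k' + 1 + 1) : Formula Var Val)
              = Formula.or chiForm (chiK (k' + 1)) := rfl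
          constructor
          · intro T hT
            rw [hrw]
            show (∃ T₁ T₂, T₁ ∪ T₂ = T ∧ gsat T₁ (chiForm : Formula Var Val)
              ∧ gsat T₂ (chiK (k' + 1))) ↔ _
            rw [quotCardLE_succ]
            constructor
            · rintro ⟨T₁, T₂, rfl, h1, h2⟩
              have hT1 := IsGCT_subset hT Set.subset_union_left
              have hT2 := IsGCT_subset hT Set.subset_union_right
              exact ⟨T₁, T₂, rfl, quotCardLE_one.mpr ((gsat_chi hT1).mp h1),
                (ih.1 T₂ hT2).mp h2⟩
            · rintro ⟨T₁, T₂, rfl, h1, h2⟩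
              have hT1 := IsGCT_subset hT Set.subset_union_left
              have hT2 := IsGCT_subset hT Set.subset_union_right
              exact ⟨T₁, T₂, rfl, (gsat_chi hT1).mpr (quotCardLE_one.mp h1),
                (ih.1 T₂ hT2).mpr h2⟩
          · intro F team hF hcomp
            rw [hrw]
            show (∃ T₁ T₂, T₁ ∪ T₂ = team ∧ csat F T₁ (chiForm : Formula Var Val)
              ∧ csat F T₂ (chiK (k' + 1))) ↔ _
            rw [ncard_succ_split]
            constructor
            · rintro ⟨T₁, T₂, rfl, h1, h2⟩
              refine ⟨T₁, T₂, rfl, ?_, ?_⟩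
              · have hs := csat_chi.mp h1
                exact (Set.ncard_le_one (Set.toFinite T₁)).mpr fun a ha b hb => hs ha hb
              · exact (ih.2 F T₂ hF fun s hs => hcomp s (Set.mem_union_right _ hs)).mp h2
            · rintro ⟨T₁, T₂, rfl, h1, h2⟩
              refine ⟨T₁, T₂, rfl, csat_chi.mpr ?_,
                (ih.2 F T₂ hF fun s hs => hcomp s (Set.mem_union_right _ hs)).mpr h2⟩
              intro a ha b hb
              exact (Set.ncard_le_one (Set.toFinite T₁)).mp h1 a ha b hb

end CausalTeams
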